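/- Let n be a natural number and Φ : Matrix (Fin n) (Fin n) ℂ. Then the characteristic polynomial of Φ satisfies Matrix.charpoly Φ = ∑_{m = 0}^{n} (−1)^m · (trace of the endomorphism of the m-th exterior power ⋀[ℂ]^m (Fin n → ℂ) induced by the linear map Matrix.toLin' Φ) · X^{n − m}, i.e. for every m ≤ n the coefficient of X^{n−m} in Matrix.charpoly Φ equals (−1)^m times the trace of the induced endomorphism of the m-th exterior power of ℂ^n. -/

import Mathlib

open Polynomial Matrix ExteriorAlgebra

/-- The linear map induced on the `m`-th exterior power of `M` by a linear
endomorphism of `M`. -/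
noncomputable def exteriorPowerMap {R M : Type*} [CommRing R] [AddCommGroup M]
    [Module R M] (m : ℕ) (f : M →ₗ[R] M) : ⋀[R]^m M →ₗ[R] ⋀[R]^m M :=
  (ExteriorAlgebra.map f).toLinearMap.restrict (p := ⋀[R]^m M) (q := ⋀[R]^m M)
    (fun x hx => by
      have h : Submodule.map (ExteriorAlgebra.map f).toLinearMap (⋀[R]^m M)
          ≤ ⋀[R]^m M := by
        rw [ExteriorAlgebra.exteriorPower, Submodule.map_pow]
        refine pow_le_pow_left' ?_ m
        rw [ExteriorAlgebra.ι_range_map_map]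
        exact LinearMap.map_le_range
      exact h ⟨x, hx, rfl⟩)

namespace CharpolyExtAux

noncomputable section

variable {n : ℕ}

lemma charpoly_expand (Φ : Matrix (Fin n) (Fin n) ℂ) :
    Φ.charpoly = ∑ s : Finset (Fin n),
      (X : ℂ[X]) ^ s.card * C (((-Φ).submatrix
        (fun i : {x // x ∉ s} => (i : Fin n)) (fun i : {x // x ∉ s} => (i : Fin n))).det) := by
  classical
  set one1 : Fin n → Fin n → ℂ[X] := fun i => (1 : Matrix (Fin n) (Fin n) ℂ[X]) i with hone1
  set b : Fin n → Fin n → ℂ[X] := ((-Φ).map C : Matrix (Fin n) (Fin n) ℂ[X]) with hb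
  have hmat : (Matrix.charmatrix Φ : Fin n → Fin n → ℂ[X])
      = (fun i => (X : ℂ[X]) • one1 i) + b := by
    funext i j
    by_cases h : i = j
    · subst h; simp only [Pi.add_apply]; simp [one1, b, Matrix.one_apply, sub_eq_add_neg]
    · simp only [Pi.add_apply]; simp [one1, b, Matrix.one_apply, h, Matrix.charmatrix_apply_ne _ _ _ h]
  rw [Matrix.charpoly]
  show Matrix.detRowAlternating (Matrix.charmatrix Φ) = _
  rw [show (Matrix.charmatrix Φ) = Matrix.of ((fun i => (X : ℂ[X]) • one1 i) + b) from hmat]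
  rw [show (Matrix.detRowAlternating (Matrix.of ((fun i => (X : ℂ[X]) • one1 i) + b)) : ℂ[X])
      = (Matrix.detRowAlternating (R := ℂ[X]) (n := Fin n)).toMultilinearMap
        ((fun i => (X : ℂ[X]) • one1 i) + b) from rfl]
  rw [MultilinearMap.map_add_univ]
  refine Finset.sum_congr rfl fun s _ => ?_
  have hpw : (s.piecewise (fun i => (X : ℂ[X]) • one1 i) b)
      = s.piecewise (fun i => (X : ℂ[X]) • (s.piecewise one1 b) i) (s.piecewise one1 b) := by
    funext i
    by_cases h : i ∈ s <;> simp [Finset.piecewise_eq_of_mem _ _ _ , h, Finset.piecewise]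
  rw [hpw, MultilinearMap.map_piecewise_smul]
  simp only [Finset.prod_const]
  -- now compute the determinant of the piecewise matrix
  have hdet : (Matrix.detRowAlternating (R := ℂ[X]) (n := Fin n)).toMultilinearMap
      (s.piecewise one1 b)
      = C (((-Φ).submatrix (fun i : {x // x ∉ s} => (i : Fin n))
          (fun i : {x // x ∉ s} => (i : Fin n))).det) := by
    have h1 : (Matrix.detRowAlternating (R := ℂ[X]) (n := Fin n)).toMultilinearMap
        (s.piecewise one1 b) = (Matrix.of (s.piecewise one1 b)).det := rfl
    rw [h1]
    set N : Matrix (Fin n) (Fin n) ℂ[X] := Matrix.of (s.piecewise one1 b) with hN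
    set e : {x // x ∈ s} ⊕ {x // x ∉ s} ≃ Fin n := Equiv.sumCompl (· ∈ s) with he
    have hsub : N.submatrix e e = Matrix.fromBlocks 1 0
        (Matrix.of fun (i : {x // x ∉ s}) (j : {x // x ∈ s}) => b (i : Fin n) (j : Fin n))
        (Matrix.of fun (i : {x // x ∉ s}) (j : {x // x ∉ s}) => b (i : Fin n) (j : Fin n)) := by
      ext i j
      rcases i with i | i <;> rcases j with j | j
      · simp [N, e, Finset.piecewise_eq_of_mem _ _ _ i.2, Matrix.one_apply, one1,
          Subtype.ext_iff, -SetLike.coe_eq_coe]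
      · have : (i : Fin n) ≠ (j : Fin n) := fun h => absurd (h ▸ i.2) j.2
        simp [N, e, Finset.piecewise_eq_of_mem _ _ _ i.2, Matrix.one_apply, one1, this]
      · simp [N, e, Finset.piecewise_eq_of_notMem _ _ _ i.2]
      · simp [N, e, Finset.piecewise_eq_of_notMem _ _ _ i.2]
    have := Matrix.det_submatrix_equiv_self e N
    rw [← this, hsub, Matrix.det_fromBlocks_zero₁₂, Matrix.det_one, one_mul]
    rw [show (Matrix.of fun (i : {x // x ∉ s}) (j : {x // x ∉ s}) => b (i : Fin n) (j : Fin n))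
        = ((-Φ).submatrix (fun i : {x // x ∉ s} => (i : Fin n))
            (fun i : {x // x ∉ s} => (i : Fin n))).map C from rfl]
    have hmd := (C : ℂ →+* ℂ[X]).map_det ((-Φ).submatrix (fun i : {x // x ∉ s} => (i : Fin n))
        (fun i : {x // x ∉ s} => (i : Fin n)))
    rw [RingHom.mapMatrix_apply] at hmd
    exact hmd.symm
  rw [hdet, smul_eq_mul]

end

lemma charpoly_coeff_minors (Φ : Matrix (Fin n) (Fin n) ℂ) {m : ℕ} (hm : m ≤ n) :
    Φ.charpoly.coeff (n - m) = (-1) ^ m *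
      ∑ S : {S : Finset (Fin n) // S.card = m},
        (Φ.submatrix (fun i : {x // x ∈ (S : Finset (Fin n))} => (i : Fin n))
          (fun i : {x // x ∈ (S : Finset (Fin n))} => (i : Fin n))).det := by
  classical
  set d : Finset (Fin n) → ℂ := fun s => (((-Φ).submatrix
      (fun i : {x // x ∉ s} => (i : Fin n)) (fun i : {x // x ∉ s} => (i : Fin n))).det) with hd
  set g : Finset (Fin n) → ℂ := fun T => ((Φ.submatrix
      (fun i : {x // x ∈ T} => (i : Fin n)) (fun i : {x // x ∈ T} => (i : Fin n))).det) with hg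
  have h1 : Φ.charpoly.coeff (n - m) = ∑ s : Finset (Fin n),
      (if n - m = s.card then d s else 0) := by
    rw [charpoly_expand, Polynomial.finset_sum_coeff]
    refine Finset.sum_congr rfl fun s _ => ?_
    rw [mul_comm, Polynomial.coeff_C_mul, Polynomial.coeff_X_pow]
    split_ifs <;> simp [d]
  rw [h1, ← Finset.sum_filter]
  have h2 : ∑ s ∈ Finset.univ.filter (fun s : Finset (Fin n) => n - m = s.card), d s
      = ∑ T ∈ Finset.univ.filter (fun T : Finset (Fin n) => T.card = m), d Tᶜ := by
    refine Finset.sum_nbij' (fun s => sᶜ) (fun T => Tᶜ) ?_ ?_ ?_ ?_ ?_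
    · intro s hs
      simp only [Finset.mem_filter, Finset.mem_univ, true_and] at hs ⊢
      rw [Finset.card_compl, ← hs, Fintype.card_fin, Nat.sub_sub_self hm]
    · intro T hT
      simp only [Finset.mem_filter, Finset.mem_univ, true_and] at hT ⊢
      rw [Finset.card_compl, hT, Fintype.card_fin]
    · intro s _; simp
    · intro T _; simp
    · intro s _; simp
  rw [h2]
  have h3 : ∀ T ∈ Finset.univ.filter (fun T : Finset (Fin n) => T.card = m),
      d Tᶜ = (-1) ^ m * g T := by
    intro T hT
    simp only [Finset.mem_filter, Finset.mem_univ, true_and] at hT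
    let e' : {x // x ∈ T} ≃ {x : Fin n // x ∉ Tᶜ} :=
      Equiv.subtypeEquivRight (fun x => by simp)
    have step : d Tᶜ = ((-Φ).submatrix
        (fun i : {x // x ∈ T} => (i : Fin n)) (fun i : {x // x ∈ T} => (i : Fin n))).det := by
      show ((-Φ).submatrix (fun i : {x : Fin n // x ∉ Tᶜ} => (i : Fin n))
          (fun i : {x : Fin n // x ∉ Tᶜ} => (i : Fin n))).det = _
      rw [← Matrix.det_submatrix_equiv_self e' ((-Φ).submatrix
        (fun i : {x : Fin n // x ∉ Tᶜ} => (i : Fin n)) (fun i => (i : Fin n)))]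
      rw [Matrix.submatrix_submatrix]
      exact congrArg Matrix.det (by ext i j; rfl)
    rw [step]
    have : ((-Φ).submatrix (fun i : {x // x ∈ T} => (i : Fin n))
        (fun i : {x // x ∈ T} => (i : Fin n)))
        = -(Φ.submatrix (fun i : {x // x ∈ T} => (i : Fin n))
            (fun i : {x // x ∈ T} => (i : Fin n))) := rfl
    rw [this, Matrix.det_neg]
    have hcard : Fintype.card {x // x ∈ T} = m := by
      rw [Fintype.card_coe, hT]
    rw [hcard]
  rw [Finset.sum_congr rfl h3, ← Finset.mul_sum]
  congr 1
  have h4 := Finset.sum_subtype (p := fun S : Finset (Fin n) => S.card = m) (F := inferInstance)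
    (Finset.univ.filter (fun T : Finset (Fin n) => T.card = m))
    (fun x => ⟨fun h => (Finset.mem_filter.mp h).2,
      fun h => Finset.mem_filter.mpr ⟨Finset.mem_univ _, h⟩⟩) g
  exact h4.trans (Finset.sum_congr rfl fun _ _ => rfl)

noncomputable section

variable (n m : ℕ)


/-- standard basis vectors of `Fin n → ℂ` -/
private def ee (i : Fin n) : Fin n → ℂ := Pi.single i 1

/-- index type: subsets of size m -/
private abbrev Idx := {S : Finset (Fin n) // S.card = m}

/-- the wedge products of standard basis vectors -/
private def eps (S : Idx n m) : ExteriorAlgebra ℂ (Fin n → ℂ) :=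
  ExteriorAlgebra.ιMulti ℂ m (fun i => ee n ((S.1.orderIsoOfFin S.2 i : Fin n)))

/-- the alternating "minor" functional at a subset T -/
private def fT (T : Idx n m) : (Fin n → ℂ) [⋀^Fin m]→ₗ[ℂ] ℂ :=
  (Matrix.detRowAlternating (R := ℂ) (n := Fin m)).compLinearMap
    (LinearMap.funLeft ℂ ℂ (fun i : Fin m => (T.1.orderIsoOfFin T.2 i : Fin n)))

private def phi (T : Idx n m) : ExteriorAlgebra ℂ (Fin n → ℂ) →ₗ[ℂ] ℂ :=
  ExteriorAlgebra.liftAlternating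
    (Function.update (fun i => (0 : (Fin n → ℂ) [⋀^Fin i]→ₗ[ℂ] ℂ)) m (fT n m T))

lemma phi_ιMulti (T : Idx n m) (v : Fin m → (Fin n → ℂ)) :
    phi n m T (ExteriorAlgebra.ιMulti ℂ m v) = fT n m T v := by
  rw [phi, ExteriorAlgebra.liftAlternating_apply_ιMulti, Function.update_self]

lemma fT_apply (T : Idx n m) (v : Fin m → (Fin n → ℂ)) :
    fT n m T v = (Matrix.of fun j i => v j ((T.1.orderIsoOfFin T.2 i : Fin n))).det := rfl

lemma phi_eps (T S : Idx n m) :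
    phi n m T (eps n m S) = if S = T then 1 else 0 := by
  rw [eps, phi_ιMulti, fT_apply]
  split_ifs with h
  · subst h
    have : (Matrix.of fun j i => ee n ((S.1.orderIsoOfFin S.2 j : Fin n))
        ((S.1.orderIsoOfFin S.2 i : Fin n))) = (1 : Matrix (Fin m) (Fin m) ℂ) := by
      ext j i
      simp only [Matrix.of_apply, ee, Pi.single_apply, Matrix.one_apply]
      by_cases hji : j = i
      · subst hji; simp
      · have : (S.1.orderIsoOfFin S.2 i : Fin n) ≠ (S.1.orderIsoOfFin S.2 j : Fin n) := by
          intro hc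
          exact hji (((S.1.orderIsoOfFin S.2).injective (Subtype.ext hc)).symm)
        simp only [this, if_false]
        rw [if_neg hji]
    rw [this, Matrix.det_one]
  · -- S ≠ T : some row is zero
    have hne : ¬ (S.1 ⊆ T.1) := by
      intro hsub
      exact h (Subtype.ext (Finset.eq_of_subset_of_card_le hsub (by rw [S.2, T.2])))
    obtain ⟨a, haS, haT⟩ := Finset.not_subset.mp hne
    apply Matrix.det_eq_zero_of_row_eq_zero ((S.1.orderIsoOfFin S.2).symm ⟨a, haS⟩)
    intro i
    have hval : (S.1.orderIsoOfFin S.2 ((S.1.orderIsoOfFin S.2).symm ⟨a, haS⟩) : Fin n) = a := by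
      simp
    simp only [Matrix.of_apply, hval, ee, Pi.single_apply]
    have h2 : (T.1.orderEmbOfFin T.2 i : Fin n) ≠ a := by
      intro hc
      exact haT (hc ▸ (T.1.orderEmbOfFin_mem T.2 i))
    simp [h2]

lemma eps_mem (S : Idx n m) : eps n m S ∈ ⋀[ℂ]^m (Fin n → ℂ) :=
  ExteriorAlgebra.ιMulti_range ℂ m ⟨_, rfl⟩

lemma span_eps :
    Submodule.span ℂ (Set.range (eps n m)) = ⋀[ℂ]^m (Fin n → ℂ) := by
  classical
  refine le_antisymm (Submodule.span_le.mpr ?_) ?_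
  · rintro x ⟨S, rfl⟩
    exact eps_mem n m S
  · rw [← ExteriorAlgebra.ιMulti_span_fixedDegree]
    rw [Submodule.span_le]
    rintro x ⟨v, rfl⟩
    -- expand v in the standard basis
    have hv : v = fun j => ∑ i : Fin n, v j i • ee n i := by
      funext j
      rw [← Finset.univ_sum_single (v j)]
      simp only [Finset.sum_apply]
      refine Finset.sum_congr rfl fun i _ => ?_
      ext k
      simp [ee, Pi.single_apply]
    have expand : ExteriorAlgebra.ιMulti ℂ m v
        = ∑ r : Fin m → Fin n, (∏ j, v j (r j)) •
            ExteriorAlgebra.ιMulti ℂ m (fun j => ee n (r j)) := by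
      conv_lhs => rw [hv]
      rw [show (ExteriorAlgebra.ιMulti ℂ m (fun j => ∑ i : Fin n, v j i • ee n i))
          = (ExteriorAlgebra.ιMulti ℂ m (M := Fin n → ℂ)).toMultilinearMap
              (fun j => ∑ i : Fin n, v j i • ee n i) from rfl]
      rw [MultilinearMap.map_sum]
      refine Finset.sum_congr rfl fun r _ => ?_
      rw [MultilinearMap.map_smul_univ]
      rfl
    rw [expand]
    refine Submodule.sum_mem _ fun r _ => Submodule.smul_mem _ _ ?_
    by_cases hr : Function.Injective r
    · -- sort r
      set S : Finset (Fin n) := Finset.univ.image r with hSdef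
      have hS : S.card = m := by
        rw [hSdef, Finset.card_image_of_injective _ hr, Finset.card_univ, Fintype.card_fin]
      set σ : Fin m → Fin m :=
        fun j => (S.orderIsoOfFin hS).symm ⟨r j, by
          rw [hSdef]; exact Finset.mem_image_of_mem r (Finset.mem_univ j)⟩ with hσ
      have hσinj : Function.Injective σ := by
        intro a b hab
        exact hr (Subtype.ext_iff.mp ((S.orderIsoOfFin hS).symm.injective hab))
      have hσbij : Function.Bijective σ := (Finite.injective_iff_bijective).mp hσinj
      set σe : Equiv.Perm (Fin m) := Equiv.ofBijective σ hσbij with hσe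
      have hcomp : (fun j => ee n (r j))
          = (fun i => ee n ((S.orderIsoOfFin hS i : Fin n))) ∘ σe := by
        funext j
        simp only [Function.comp_apply, hσe, Equiv.ofBijective_apply, hσ]
        congr 1
        simp
      have hperm := (ExteriorAlgebra.ιMulti ℂ m (M := Fin n → ℂ)).map_perm
        (fun i => ee n ((S.orderIsoOfFin hS i : Fin n))) σe
      rw [hcomp, hperm]
      have hmem : ExteriorAlgebra.ιMulti ℂ m
          (fun i => ee n ((S.orderIsoOfFin hS i : Fin n)))
          ∈ Submodule.span ℂ (Set.range (eps n m)) :=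
        Submodule.subset_span ⟨⟨S, hS⟩, rfl⟩
      rcases Int.units_eq_one_or (Equiv.Perm.sign σe) with h1 | h1 <;> rw [h1]
      · simpa using hmem
      · simpa using Submodule.neg_mem _ hmem
    · rw [(ExteriorAlgebra.ιMulti ℂ m (M := Fin n → ℂ)).map_eq_zero_of_not_injective
        _ (fun hinj => hr (fun a b hab => hinj (congrArg (ee n) hab)))]
      exact Submodule.zero_mem _

lemma eps_linearIndependent : LinearIndependent ℂ (eps n m) := by
  classical
  rw [Fintype.linearIndependent_iff]
  intro g hg T
  have := congrArg (phi n m T) hg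
  rw [map_sum, map_zero] at this
  simp only [_root_.map_smul, phi_eps, smul_eq_mul, mul_ite, mul_one, mul_zero] at this
  rw [Finset.sum_ite_eq' Finset.univ T g] at this
  simpa using this

/-- the basis vectors inside the exterior power -/
private def bv (S : Idx n m) : ⋀[ℂ]^m (Fin n → ℂ) := ⟨eps n m S, eps_mem n m S⟩

private def expBasis : Module.Basis (Idx n m) ℂ (⋀[ℂ]^m (Fin n → ℂ)) :=
  Module.Basis.mk (v := bv n m)
    (by
      have h := eps_linearIndependent n m
      have hcomp : eps n m = (Submodule.subtype _) ∘ (bv n m) := rfl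
      rw [hcomp] at h
      exact h.of_comp _)
    (by
      have hmap : Submodule.map (Submodule.subtype (⋀[ℂ]^m (Fin n → ℂ)))
          (Submodule.span ℂ (Set.range (bv n m))) =
          Submodule.map (Submodule.subtype (⋀[ℂ]^m (Fin n → ℂ))) ⊤ := by
        rw [Submodule.map_span, Submodule.map_subtype_top, ← Set.range_comp]
        exact span_eps n m
      have := Submodule.map_injective_of_injective
        (Submodule.injective_subtype (⋀[ℂ]^m (Fin n → ℂ))) hmap
      rw [this])

lemma expBasis_repr (T : Idx n m) (x : ⋀[ℂ]^m (Fin n → ℂ)) :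
    (expBasis n m).repr x T = phi n m T (x : ExteriorAlgebra ℂ (Fin n → ℂ)) := by
  classical
  have key : (Finsupp.lapply T).comp ((expBasis n m).repr.toLinearMap)
      = (phi n m T).comp (Submodule.subtype _) := by
    refine Module.Basis.ext (expBasis n m) fun S => ?_
    simp only [LinearMap.coe_comp, Function.comp_apply, Module.Basis.repr_self,
      Finsupp.lapply_apply, Finsupp.single_apply, Submodule.coe_subtype]
    rw [show ((expBasis n m) S : ExteriorAlgebra ℂ (Fin n → ℂ)) = eps n m S by
      rw [expBasis, Module.Basis.mk_apply]; rfl]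
    rw [phi_eps]
    by_cases h : S = T <;> simp [h]
  exact LinearMap.congr_fun key x

lemma trace_exteriorPowerMap (Φ : Matrix (Fin n) (Fin n) ℂ) :
    LinearMap.trace ℂ (⋀[ℂ]^m (Fin n → ℂ)) (exteriorPowerMap m (Matrix.toLin' Φ))
      = ∑ S : Idx n m, (Φ.submatrix (fun i : {x // x ∈ (S.1 : Finset (Fin n))} => (i : Fin n))
          (fun i : {x // x ∈ (S.1 : Finset (Fin n))} => (i : Fin n))).det := by
  classical
  rw [LinearMap.trace_eq_matrix_trace ℂ (expBasis n m), Matrix.trace]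
  refine Finset.sum_congr rfl fun S _ => ?_
  rw [Matrix.diag_apply, LinearMap.toMatrix_apply, expBasis_repr]
  have hval : ((exteriorPowerMap m (Matrix.toLin' Φ) ((expBasis n m) S) :
      ⋀[ℂ]^m (Fin n → ℂ)) : ExteriorAlgebra ℂ (Fin n → ℂ))
      = (ExteriorAlgebra.map (Matrix.toLin' Φ)) (eps n m S) := by
    rw [show ((expBasis n m) S) = bv n m S by rw [expBasis, Module.Basis.mk_apply]]
    rfl
  rw [hval]
  rw [show eps n m S = ExteriorAlgebra.ιMulti ℂ m
      (fun i => ee n ((S.1.orderIsoOfFin S.2 i : Fin n))) from rfl,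
    ExteriorAlgebra.map_apply_ιMulti, phi_ιMulti, fT_apply]
  have hmat : (Matrix.of fun j i =>
      ((Matrix.toLin' Φ ∘ fun i => ee n ((S.1.orderIsoOfFin S.2 i : Fin n))) j)
        ((S.1.orderIsoOfFin S.2 i : Fin n)))
      = (Φ.submatrix (fun i : Fin m => ((S.1.orderIsoOfFin S.2 i : Fin n)))
          (fun i : Fin m => ((S.1.orderIsoOfFin S.2 i : Fin n))))ᵀ := by
    ext j i
    simp only [Matrix.of_apply, Function.comp_apply, Matrix.transpose_apply,
      Matrix.submatrix_apply, Matrix.toLin'_apply, ee]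
    rw [Matrix.mulVec_single]
    simp
  rw [hmat, Matrix.det_transpose]
  have e := (S.1.orderIsoOfFin S.2).toEquiv
  rw [← Matrix.det_submatrix_equiv_self (S.1.orderIsoOfFin S.2).toEquiv
    (Φ.submatrix (fun i : {x // x ∈ (S.1 : Finset (Fin n))} => (i : Fin n))
      (fun i => (i : Fin n))), Matrix.submatrix_submatrix]
  rfl

end

end CharpolyExtAux

theorem charpoly_coeff_eq_trace_exteriorPower
    (n : ℕ) (Φ : Matrix (Fin n) (Fin n) ℂ) :
    ∀ m : ℕ, m ≤ n →
      (Matrix.charpoly Φ).coeff (n - m)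
        = (-1) ^ m *
          LinearMap.trace ℂ (⋀[ℂ]^m (Fin n → ℂ)) (exteriorPowerMap m (Matrix.toLin' Φ)) := by
  intro m hm
  rw [CharpolyExtAux.charpoly_coeff_minors Φ hm, CharpolyExtAux.trace_exteriorPowerMap n m Φ]
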